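/- arXiv:1907.13514 — 3 statements merged into one kernel-verified Lean document; each statement's English description precedes it below -/
import Mathlib

section
/- (Maximum principle) Let G=(V,q) be a graph, S ⊆ V a finite subset, and T>0. Suppose u:[0,T]×V→ℝ is such that t ↦ u_t(x) is differentiable for each x ∈ S and satisfies the heat inequality ∂_t u_t(x) ≤ Δu_t(x) for all x ∈ S and all t ∈ [0,T]. Then max_{(x,t)∈S×[0,T]} u_t(x) ≤ sup_{(x,t)∈((V∖S)×[0,T])∪(V×{0})} u_t(x), where the right-hand side is interpreted in the extended reals. -/
open scoped BigOperators Classical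

namespace OllivierGraph

variable {V : Type*}

/-- A graph structure on `V`: non-negative edge weights with finitely many
neighbours for every vertex. -/
def IsGraph (q : V → V → ℝ) : Prop :=
  (∀ x y, 0 ≤ q x y) ∧ ∀ x, {y | 0 < q x y}.Finite

/-- `m` is an invariant measure for `q`, i.e. `q` is reversible w.r.t. `m`. -/
def IsInvariantMeasure (q : V → V → ℝ) (m : V → ℝ) : Prop :=
  (∀ x, 0 < m x) ∧ ∀ x y, q x y * m x = q y x * m y

/-- Reversibility (undirectedness) of the graph. -/
def IsReversible (q : V → V → ℝ) : Prop :=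
  ∃ m : V → ℝ, IsInvariantMeasure q m

/-- The graph Laplacian `Δ f (x) = Σ_y q(x,y)(f(y) - f(x))`. -/
noncomputable def lap (q : V → V → ℝ) (f : V → ℝ) (x : V) : ℝ :=
  ∑' y, q x y * (f y - f x)

/-- The set of lengths of walks from `x` to `y`. -/
def walkLens (q : V → V → ℝ) (x y : V) : Set ℕ :=
  {n | ∃ p : ℕ → V, p 0 = x ∧ p n = y ∧ ∀ i < n, 0 < q (p i) (p (i + 1))}

/-- The combinatorial distance. -/
noncomputable def gdist (q : V → V → ℝ) (x y : V) : ℕ :=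
  sInf (walkLens q x y)

/-- Connectedness: every two vertices are joined by some walk. -/
def GConnected (q : V → V → ℝ) : Prop :=
  ∀ x y : V, (walkLens q x y).Nonempty

/-- `q_min`: the infimum of the positive edge weights. -/
noncomputable def qmin (q : V → V → ℝ) : ℝ :=
  sInf {c : ℝ | 0 < c ∧ ∃ x y, q x y = c}

/-- Boundedness of a real valued function. -/
def IsBoundedFun (f : V → ℝ) : Prop := ∃ C, ∀ x, |f x| ≤ C

/-- Supremum norm. -/
noncomputable def supNorm (f : V → ℝ) : ℝ := ⨆ x, |f x|

/-- `∇_{xy} f = (f(x) - f(y)) / d(x,y)`. -/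
noncomputable def gradxy (q : V → V → ℝ) (f : V → ℝ) (x y : V) : ℝ :=
  (f x - f y) / (gdist q x y : ℝ)

/-- `‖∇ f‖_∞ = sup_{x ≠ y} |∇_{xy} f|`. -/
noncomputable def gradNorm (q : V → V → ℝ) (f : V → ℝ) : ℝ :=
  ⨆ p : {p : V × V // p.1 ≠ p.2}, |gradxy q f p.1.1 p.1.2|

/-- Ollivier curvature `κ(x,y)`. -/
noncomputable def kappa (q : V → V → ℝ) (x y : V) : ℝ :=
  sInf {c | ∃ f : V → ℝ, gradxy q f y x = 1 ∧ gradNorm q f = 1 ∧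
    c = gradxy q (lap q f) x y}

/-- Non-negative Ollivier curvature. -/
def NonnegOllivier (q : V → V → ℝ) : Prop :=
  ∀ x y : V, x ≠ y → 0 ≤ kappa q x y

/-- Transport plan from `x0` to `y0`. -/
def IsTransportPlan (q : V → V → ℝ) (x0 y0 : V) (ρ : V → V → ℝ) : Prop :=
  (∀ x y, 0 ≤ ρ x y) ∧
  (∀ x, x ≠ x0 → ∑' y, ρ x y = q x0 x) ∧
  (∀ y, y ≠ y0 → ∑' x, ρ x y = q y0 y)

/-- The cost of a transport plan. -/
noncomputable def cost (q : V → V → ℝ) (x0 y0 : V) (ρ : V → V → ℝ) : ℝ :=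
  ∑' p : V × V, ρ p.1 p.2 * ((gdist q x0 y0 : ℝ) - (gdist q p.1 p.2 : ℝ))

/-- `μ_ρ(k)`: the mass transported over distance `d(x0,y0) + k`. -/
noncomputable def muRho (q : V → V → ℝ) (x0 y0 : V) (ρ : V → V → ℝ) (k : ℤ) : ℝ :=
  ∑' p : V × V,
    if (gdist q p.1 p.2 : ℤ) - (gdist q x0 y0 : ℤ) = k then ρ p.1 p.2 else 0

/-- Optimality of a transport plan: it maximizes the cost. -/
def IsOptimalPlan (q : V → V → ℝ) (x0 y0 : V) (ρ : V → V → ℝ) : Prop :=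
  IsTransportPlan q x0 y0 ρ ∧
  ∀ σ : V → V → ℝ, IsTransportPlan q x0 y0 σ → cost q x0 y0 σ ≤ cost q x0 y0 ρ

/-- A coupling graph of `q`: a graph on `V × V` whose Laplacian tensorizes. -/
def IsCouplingGraph (q : V → V → ℝ) (qt : V × V → V × V → ℝ) : Prop :=
  IsGraph qt ∧
  ∀ f : V → ℝ,
    (∀ p : V × V, lap qt (fun r => f r.1) p = lap q f p.1) ∧
    (∀ p : V × V, lap qt (fun r => f r.2) p = lap q f p.2)

/-- A perfect coupling graph. -/
def IsPerfectCoupling (q : V → V → ℝ) (qt : V × V → V × V → ℝ) : Prop :=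
  IsCouplingGraph q qt ∧
  ∀ x0 y0 : V,
    IsOptimalPlan q x0 y0 (fun x y => qt (x0, y0) (x, y)) ∧
    (∀ k : ℤ, 1 < |k| → muRho q x0 y0 (fun x y => qt (x0, y0) (x, y)) k = 0) ∧
    (x0 ≠ y0 → 2 * qmin q ≤ muRho q x0 y0 (fun x y => qt (x0, y0) (x, y)) (-1))

/-- Truncated Laplacian `Δ_S`, corresponding to the rates `q_S(x,y) = q(x,y) 1_S(x)`. -/
noncomputable def lapS (q : V → V → ℝ) (S : Finset V) (f : V → ℝ) (x : V) : ℝ :=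
  if x ∈ S then lap q f x else 0

/-- Truncated heat semigroup `P_t^S f = Σ_k t^k Δ_S^k (f · 1_S) / k!`. -/
noncomputable def heatS (q : V → V → ℝ) (S : Finset V) (t : ℝ) (f : V → ℝ) (x : V) : ℝ :=
  ∑' k : ℕ, t ^ k / (Nat.factorial k : ℝ) *
    ((lapS q S)^[k] (fun v => if v ∈ S then f v else 0)) x

/-- Heat semigroup applied to non-negative functions: supremum of the truncations. -/
noncomputable def heatPos (q : V → V → ℝ) (t : ℝ) (f : V → ℝ) (x : V) : ℝ :=
  ⨆ S : Finset V, heatS q S t f x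

/-- Heat semigroup `P_t f := P_t f_+ - P_t f_-`. -/
noncomputable def heat (q : V → V → ℝ) (t : ℝ) (f : V → ℝ) (x : V) : ℝ :=
  heatPos q t (fun v => max (f v) 0) x - heatPos q t (fun v => max (-f v) 0) x

/-- Stochastic completeness: `P_t 1 = 1`. -/
def StochasticallyComplete (q : V → V → ℝ) : Prop :=
  ∀ t : ℝ, 0 ≤ t → ∀ x, heat q t (fun _ => 1) x = 1

/-- The birth-death chain on `ℕ` with rates `2c` and absorbing state `0`. -/
noncomputable def qBD (c : ℝ) : ℕ → ℕ → ℝ :=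
  fun x y => if 0 < x ∧ (x = y + 1 ∨ y = x + 1) then 2 * c else 0

/-- `φ_t(n) = P_t^{ℕ₀} 1_{ℕ₊} (n)`. -/
noncomputable def phiBD (c : ℝ) (t : ℝ) (n : ℕ) : ℝ :=
  heat (qBD c) t (fun k => if 0 < k then 1 else 0) n

/-- `ℓ¹` norm with respect to the measure `m`. -/
noncomputable def l1Norm (m : V → ℝ) (f : V → ℝ) : ℝ := ∑' x, m x * |f x|

/-- Membership in `ℓ¹(V, m)`. -/
def MemL1 (m : V → ℝ) (f : V → ℝ) : Prop := Summable fun x => m x * |f x|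

/-- The `ℓ¹`-Wasserstein distance (via Kantorovich duality). -/
noncomputable def W1 (q : V → V → ℝ) (m : V → ℝ) (μ ν : V → ℝ) : ℝ :=
  sSup {c | ∃ g : V → ℝ, gradNorm q g ≤ 1 ∧ c = ∑' x, m x * (μ x - ν x) * g x}

/-- The Laplacian as a matrix (finite graphs). -/
noncomputable def lapMat [Fintype V] (q : V → V → ℝ) [DecidableEq V] : Matrix V V ℝ :=
  Matrix.of fun x y => q x y - if x = y then ∑ z, q x z else 0

/-- The heat semigroup `e^{tΔ}` of a finite graph. -/
noncomputable def heatFin [Fintype V] [DecidableEq V] (q : V → V → ℝ) (t : ℝ)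
    (f : V → ℝ) : V → ℝ :=
  (NormedSpace.exp (t • lapMat q)).mulVec f

/-- `λ` is an eigenvalue of `-Δ`. -/
def IsLapEigenvalue (q : V → V → ℝ) (lam : ℝ) : Prop :=
  ∃ f : V → ℝ, f ≠ 0 ∧ ∀ x, lap q f x = -lam * f x

/-- Boundary measure `|∂A|` of a set of vertices. -/
noncomputable def boundaryMeasure [Fintype V] [DecidableEq V] (q : V → V → ℝ)
    (m : V → ℝ) (A : Finset V) : ℝ :=
  ∑ x ∈ A, ∑ y ∈ Aᶜ, m x * q x y

/-- The Cheeger constant of a finite graph. -/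
noncomputable def cheeger [Fintype V] [DecidableEq V] (q : V → V → ℝ) (m : V → ℝ) : ℝ :=
  sInf {c | ∃ A : Finset V, 0 < (∑ x ∈ A, m x) ∧ 2 * (∑ x ∈ A, m x) ≤ ∑ x, m x ∧
    c = boundaryMeasure q m A / ∑ x ∈ A, m x}

/-- The diameter of a graph. -/
noncomputable def gdiam (q : V → V → ℝ) : ℝ :=
  ⨆ p : V × V, (gdist q p.1 p.2 : ℝ)


private lemma key_max {V : Type*} (q : V → V → ℝ) (hg : IsGraph q)
    (S : Finset V) (T : ℝ) (hT : 0 < T)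
    (u u' : ℝ → V → ℝ)
    (hderiv : ∀ x ∈ S, ∀ t ∈ Set.Icc (0 : ℝ) T,
      HasDerivWithinAt (fun s => u s x) (u' t x) (Set.Icc (0 : ℝ) T) t)
    (hineq : ∀ x ∈ S, ∀ t ∈ Set.Icc (0 : ℝ) T, u' t x ≤ lap q (u t) x)
    (B : ℝ) (hbd : ∀ y ∉ S, ∀ s ∈ Set.Icc (0:ℝ) T, u s y ≤ B)
    (h0 : ∀ y, u 0 y ≤ B) :
    ∀ x ∈ S, ∀ t ∈ Set.Icc (0:ℝ) T, u t x ≤ B := by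
  intro x hx t ht
  have hS : S.Nonempty := ⟨x, hx⟩
  refine le_of_forall_pos_le_add ?_
  intro δ hδ
  have hε0 : 0 < δ / T := div_pos hδ hT
  set ε := δ / T with hεdef
  have main : u t x - ε * t ≤ B := by
    set g : ℝ → ℝ := fun s => S.sup' hS (fun y => u s y) - ε * s with hgdef
    have hcont : ContinuousOn g (Set.Icc 0 T) := by
      apply ContinuousOn.sub
      · exact ContinuousOn.finset_sup'_apply hS
          (fun y hy s hs => (hderiv y hy s hs).continuousWithinAt)
      · exact (continuous_const.mul continuous_id).continuousOn
    obtain ⟨t1, ht1, hmax⟩ := isCompact_Icc.exists_isMaxOn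
      ⟨0, Set.left_mem_Icc.2 hT.le⟩ hcont
    have hgt : u t x - ε * t ≤ g t1 := by
      refine le_trans ?_ (hmax ht)
      have h1 : u t x ≤ S.sup' hS (fun y => u t y) := Finset.le_sup' _ hx
      simp only [hgdef]
      linarith
    by_contra hcon
    push_neg at hcon
    have hgt1B : B < g t1 := lt_of_lt_of_le (by linarith) hgt
    have ht1pos : 0 < t1 := by
      rcases lt_or_eq_of_le ht1.1 with h | h
      · exact h
      · exfalso
        obtain ⟨y, hy, hey⟩ := Finset.exists_mem_eq_sup' hS (fun y => u 0 y)
        have : g t1 = u 0 y - ε * t1 := by rw [hgdef, ← h]; simp [← hey]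
        have := h0 y
        have hεt : 0 ≤ ε * t1 := by rw [← h]; simp
        linarith [hgt1B, this, hεt]
    obtain ⟨x1, hx1, hex1⟩ := Finset.exists_mem_eq_sup' hS (fun y => u t1 y)
    have hut1 : u t1 x1 = g t1 + ε * t1 := by
      simp only [hgdef, ← hex1]; ring
    have hx1B : B < u t1 x1 := by nlinarith [hgt1B, mul_pos hε0 ht1pos]
    have hlap : lap q (u t1) x1 ≤ 0 := by
      refine tsum_nonpos fun y => ?_
      refine mul_nonpos_of_nonneg_of_nonpos (hg.1 x1 y) ?_
      rcases Classical.em (y ∈ S) with hy | hy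
      · have h5 : u t1 y ≤ S.sup' hS (fun y => u t1 y) := Finset.le_sup' _ hy
        rw [hex1] at h5
        linarith
      · have := hbd y hy t1 ht1
        linarith
    have hu'le : u' t1 x1 ≤ 0 := le_trans (hineq x1 hx1 t1 ht1) hlap
    have hslope : ∀ s ∈ Set.Ico (0:ℝ) t1, ε ≤ slope (fun s => u s x1) t1 s := by
      intro s hs
      have hsI : s ∈ Set.Icc (0:ℝ) T := ⟨hs.1, hs.2.le.trans ht1.2⟩
      have h2 : g s ≤ g t1 := hmax hsI
      have h1 : u s x1 ≤ S.sup' hS (fun y => u s y) := Finset.le_sup' _ hx1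
      have h3 : u s x1 - u t1 x1 ≤ ε * (s - t1) := by
        simp only [hgdef] at h2
        nlinarith [h1, h2, hut1, hgt1B]
      have hd : s - t1 < 0 := by linarith [hs.2]
      rw [slope_def_field, le_div_iff_of_neg hd]
      nlinarith [h3]
    have htend : Filter.Tendsto (slope (fun s => u s x1) t1)
        (nhdsWithin t1 (Set.Ico (0:ℝ) t1)) (nhds (u' t1 x1)) := by
      have hd := hderiv x1 hx1 t1 ht1
      rw [hasDerivWithinAt_iff_tendsto_slope] at hd
      refine hd.mono_left (nhdsWithin_mono _ ?_)
      intro s hs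
      exact ⟨⟨hs.1, hs.2.le.trans ht1.2⟩, ne_of_lt hs.2⟩
    haveI : (nhdsWithin t1 (Set.Ico (0:ℝ) t1)).NeBot := right_nhdsWithin_Ico_neBot ht1pos
    have hεle : ε ≤ u' t1 x1 :=
      ge_of_tendsto htend (eventually_nhdsWithin_of_forall hslope)
    linarith
  have hεT : ε * T = δ := by rw [hεdef]; exact div_mul_cancel₀ δ hT.ne'
  have : ε * t ≤ ε * T := mul_le_mul_of_nonneg_left ht.2 hε0.le
  linarith [main]

theorem maximum_principle
    {V : Type*} [Countable V] (q : V → V → ℝ) (hg : IsGraph q)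
    (S : Finset V) (T : ℝ) (hT : 0 < T)
    (u u' : ℝ → V → ℝ)
    (hderiv : ∀ x ∈ S, ∀ t ∈ Set.Icc (0 : ℝ) T,
      HasDerivWithinAt (fun s => u s x) (u' t x) (Set.Icc (0 : ℝ) T) t)
    (hineq : ∀ x ∈ S, ∀ t ∈ Set.Icc (0 : ℝ) T, u' t x ≤ lap q (u t) x) :
    ∀ x ∈ S, ∀ t ∈ Set.Icc (0 : ℝ) T,
      (u t x : EReal) ≤
        ⨆ p ∈ {p : V × ℝ | (p.1 ∉ S ∧ p.2 ∈ Set.Icc (0 : ℝ) T) ∨ p.2 = 0},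
          ((u p.2 p.1 : ℝ) : EReal) := by
  intro x hx t ht
  set Bs : Set (V × ℝ) :=
    {p : V × ℝ | (p.1 ∉ S ∧ p.2 ∈ Set.Icc (0 : ℝ) T) ∨ p.2 = 0} with hBs
  set M : EReal := ⨆ p ∈ Bs, ((u p.2 p.1 : ℝ) : EReal) with hM
  have hmem : ∀ p ∈ Bs, ((u p.2 p.1 : ℝ) : EReal) ≤ M := fun p hp =>
    le_iSup₂ (f := fun (p : V × ℝ) (_ : p ∈ Bs) => ((u p.2 p.1 : ℝ) : EReal)) p hp
  rcases eq_top_or_lt_top M with htop | hlt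
  · rw [htop]; exact le_top
  · have hbot : ((u 0 x : ℝ) : EReal) ≤ M := hmem (x, 0) (Or.inr rfl)
    have hne_bot : M ≠ ⊥ := by
      intro hb
      rw [hb] at hbot
      exact (EReal.coe_ne_bot _) (le_bot_iff.mp hbot)
    obtain ⟨B, hB⟩ : ∃ B : ℝ, M = (B : EReal) :=
      ⟨M.toReal, (EReal.coe_toReal hlt.ne hne_bot).symm⟩
    have hle : ∀ p ∈ Bs, u p.2 p.1 ≤ B := by
      intro p hp
      have := hmem p hp
      rw [hB] at this
      exact_mod_cast this
    have := key_max q hg S T hT u u' hderiv hineq B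
      (fun y hy s hs => hle (y, s) (Or.inl ⟨hy, hs⟩))
      (fun y => hle (y, 0) (Or.inr rfl)) x hx t ht
    rw [hB]
    exact_mod_cast this

end OllivierGraph
end

section
/- (Heat semigroup as minimal solution) Let G=(V,q) be a graph with heat semigroup P_t. Suppose u:[0,∞)×V→ℝ satisfies: u_t is bounded on V for each t, u_t ≥ 0 for all t, t ↦ u_t(x) is differentiable for each x ∈ V, and ∂_t u_t(x) ≥ Δu_t(x) for all x ∈ V and t ≥ 0. Then u_t ≥ P_t u_0 for all t ≥ 0. -/
open scoped BigOperators Classical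

namespace OllivierGraph

variable {V : Type*}

section MatrixAux

open NormedSpace

attribute [local instance 2000] Matrix.linftyOpNormedRing Matrix.linftyOpNormedAlgebra

variable {n : Type*} [Fintype n] [DecidableEq n]

/-- Entry evaluation as a continuous linear map (w.r.t. the linfty operator norm). -/
noncomputable def entryCLM (i j : n) : Matrix n n ℝ →L[ℝ] ℝ :=
  LinearMap.mkContinuous
    { toFun := fun M => M i j
      map_add' := fun _ _ => rfl
      map_smul' := fun _ _ => rfl } 1
    (fun M => by
      have h1 : ‖M i j‖₊ ≤ ∑ j', ‖M i j'‖₊ :=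
        Finset.single_le_sum (f := fun j' => ‖M i j'‖₊) (fun _ _ => zero_le) (Finset.mem_univ j)
      have h2 : (∑ j', ‖M i j'‖₊) ≤ ‖M‖₊ := by
        rw [Matrix.linfty_opNNNorm_def]
        exact Finset.le_sup (f := fun i => ∑ j', ‖M i j'‖₊) (Finset.mem_univ i)
      have := h1.trans h2
      change ‖M i j‖ ≤ 1 * ‖M‖
      simpa [one_mul, ← NNReal.coe_le_coe, LinearMap.coe_mk, AddHom.coe_mk] using this)

@[simp] lemma entryCLM_apply (i j : n) (M : Matrix n n ℝ) : entryCLM i j M = M i j := rfl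

lemma summable_entry (A : Matrix n n ℝ) (i j : n) :
    Summable fun k : ℕ => ((k.factorial : ℝ))⁻¹ * (A ^ k) i j := by
  have h := (NormedSpace.expSeries_summable' (𝕂 := ℝ) A).map (entryCLM i j)
    (ContinuousLinearMap.continuous _)
  simpa [entryCLM_apply, Function.comp_def, Matrix.smul_apply, smul_eq_mul] using h

lemma exp_entry_eq_tsum (A : Matrix n n ℝ) (i j : n) :
    exp A i j = ∑' k : ℕ, ((k.factorial : ℝ))⁻¹ * (A ^ k) i j := by
  have h := ContinuousLinearMap.map_tsum (entryCLM i j)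
    (NormedSpace.expSeries_summable' (𝕂 := ℝ) A)
  rw [NormedSpace.exp_eq_tsum ℝ]
  simpa [entryCLM_apply] using h

lemma pow_entry_nonneg {A : Matrix n n ℝ} (hA : ∀ i j, 0 ≤ A i j) :
    ∀ (k : ℕ) (i j : n), 0 ≤ (A ^ k) i j := by
  intro k
  induction k with
  | zero => intro i j; by_cases h : i = j <;> simp [pow_zero, Matrix.one_apply, h]
  | succ k ih =>
    intro i j
    rw [pow_succ, Matrix.mul_apply]
    exact Finset.sum_nonneg fun l _ => mul_nonneg (ih i l) (hA l j)

lemma exp_entry_nonneg_of_nonneg {A : Matrix n n ℝ} (hA : ∀ i j, 0 ≤ A i j) (i j : n) :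
    0 ≤ exp A i j := by
  rw [exp_entry_eq_tsum]
  exact tsum_nonneg fun k => mul_nonneg (by positivity) (pow_entry_nonneg hA k i j)

/-- If the off-diagonal entries of `A` are nonnegative, then `exp A` has nonnegative entries. -/
lemma exp_entry_nonneg {A : Matrix n n ℝ} (hA : ∀ i j, i ≠ j → 0 ≤ A i j) (i j : n) :
    0 ≤ exp A i j := by
  set c : ℝ := ∑ k, |A k k| with hc
  set B : Matrix n n ℝ := A + c • 1 with hB
  have hBnn : ∀ i j, 0 ≤ B i j := by
    intro i j
    by_cases h : i = j
    · subst h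
      have h1 : |A i i| ≤ c := Finset.single_le_sum (f := fun k => |A k k|)
        (fun _ _ => abs_nonneg _) (Finset.mem_univ i)
      have := neg_abs_le (A i i)
      simp only [hB, Matrix.add_apply, Matrix.smul_apply, Matrix.one_apply_eq, smul_eq_mul,
        mul_one]
      linarith
    · simp only [hB, Matrix.add_apply, Matrix.smul_apply, Matrix.one_apply_ne h, smul_eq_mul,
        mul_zero, add_zero]
      exact hA i j h
  have hAeq : A = B + (-c) • 1 := by
    rw [hB]
    rw [add_assoc, ← add_smul, add_neg_cancel, zero_smul, add_zero]
  have hcomm : Commute B ((-c) • (1 : Matrix n n ℝ)) := (Commute.one_right B).smul_right (-c)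
  rw [hAeq, Matrix.exp_add_of_commute _ _ hcomm]
  have hscal : exp ((-c) • (1 : Matrix n n ℝ)) = Real.exp (-c) • (1 : Matrix n n ℝ) := by
    rw [← Algebra.algebraMap_eq_smul_one, Real.exp_eq_exp_ℝ, ← Algebra.algebraMap_eq_smul_one]
    exact (NormedSpace.algebraMap_exp_comm (-c)).symm
  rw [hscal, mul_smul_comm, mul_one, Matrix.smul_apply, smul_eq_mul]
  exact mul_nonneg (Real.exp_pos _).le (exp_entry_nonneg_of_nonneg hBnn i j)

lemma exp_smul_entry_nonneg {A : Matrix n n ℝ} (hA : ∀ i j, i ≠ j → 0 ≤ A i j)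
    {t : ℝ} (ht : 0 ≤ t) (i j : n) : 0 ≤ exp (t • A) i j := by
  refine exp_entry_nonneg (fun i j hij => ?_) i j
  simpa using mul_nonneg ht (hA i j hij)

lemma exp_smul_mulVec_eq_tsum (A : Matrix n n ℝ) (t : ℝ) (v : n → ℝ) (i : n) :
    (exp (t • A)).mulVec v i
      = ∑' k : ℕ, t ^ k / (k.factorial : ℝ) * ((A ^ k).mulVec v i) := by
  have hsum : ∀ j : n, Summable fun k : ℕ => t ^ k / (k.factorial : ℝ) * (A ^ k) i j * v j := by
    intro j
    have h := (summable_entry (t • A) i j).mul_right (v j)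
    have : ∀ k : ℕ, ((k.factorial : ℝ))⁻¹ * ((t • A) ^ k) i j * v j
        = t ^ k / (k.factorial : ℝ) * (A ^ k) i j * v j := by
      intro k
      rw [smul_pow, Matrix.smul_apply, smul_eq_mul]
      ring
    simpa [this] using h
  have hentry : ∀ j : n, exp (t • A) i j
      = ∑' k : ℕ, t ^ k / (k.factorial : ℝ) * (A ^ k) i j := by
    intro j
    rw [exp_entry_eq_tsum]
    congr 1
    funext k
    rw [smul_pow, Matrix.smul_apply, smul_eq_mul]
    ring
  rw [Matrix.mulVec, dotProduct]
  calc (∑ j, exp (t • A) i j * v j)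
      = ∑ j, ∑' k : ℕ, t ^ k / (k.factorial : ℝ) * (A ^ k) i j * v j := by
        refine Finset.sum_congr rfl fun j _ => ?_
        rw [hentry j, ← tsum_mul_right]
    _ = ∑' k : ℕ, ∑ j, t ^ k / (k.factorial : ℝ) * (A ^ k) i j * v j :=
        (Summable.tsum_finsetSum (fun j _ => hsum j)).symm
    _ = ∑' k : ℕ, t ^ k / (k.factorial : ℝ) * ((A ^ k).mulVec v i) := by
        congr 1
        funext k
        rw [Matrix.mulVec, dotProduct, Finset.mul_sum]
        exact Finset.sum_congr rfl fun j _ => by ring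

end MatrixAux

section GraphAux

open NormedSpace

attribute [local instance 2000] Matrix.linftyOpNormedRing Matrix.linftyOpNormedAlgebra

variable {V : Type*} (q : V → V → ℝ)

lemma q_eq_zero_of_not_mem (hg : IsGraph q) {x y : V} (hy : y ∉ (hg.2 x).toFinset) :
    q x y = 0 := by
  rw [Set.Finite.mem_toFinset] at hy
  exact le_antisymm (not_lt.mp hy) (hg.1 x y)

lemma lap_eq_finsum (hg : IsGraph q) (g : V → ℝ) (x : V) :
    lap q g x = ∑ y ∈ (hg.2 x).toFinset, q x y * (g y - g x) := by
  refine tsum_eq_sum fun y hy => ?_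
  rw [q_eq_zero_of_not_mem q hg hy, zero_mul]

/-- The total weight at a vertex. -/
noncomputable def degA (hg : IsGraph q) (x : V) : ℝ := ∑ y ∈ (hg.2 x).toFinset, q x y

lemma lap_eq_finsum' (hg : IsGraph q) (g : V → ℝ) (x : V) :
    lap q g x = (∑ y ∈ (hg.2 x).toFinset, q x y * g y) - degA q hg x * g x := by
  rw [lap_eq_finsum q hg, degA, Finset.sum_mul]
  rw [← Finset.sum_sub_distrib]
  exact Finset.sum_congr rfl fun y _ => by ring

/-- The matrix of the truncated Laplacian `Δ_S` on the finite set `S`. -/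
noncomputable def matA (hg : IsGraph q) (S : Finset V) :
    Matrix {v // v ∈ S} {v // v ∈ S} ℝ :=
  Matrix.of fun i j => q i j - if i = j then degA q hg i else 0

lemma matA_offdiag_nonneg (hg : IsGraph q) (S : Finset V) :
    ∀ i j : {v // v ∈ S}, i ≠ j → 0 ≤ matA q hg S i j := by
  intro i j hij
  simp only [matA, Matrix.of_apply, if_neg hij, sub_zero]
  exact hg.1 _ _

lemma matA_mulVec (hg : IsGraph q) (S : Finset V) (g : V → ℝ) (k : {v // v ∈ S}) :
    (matA q hg S).mulVec (fun j => g j) k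
      = (∑ j : {v // v ∈ S}, q k j * g j) - degA q hg k * g k := by
  rw [Matrix.mulVec, dotProduct]
  have : ∀ j : {v // v ∈ S}, matA q hg S k j * g j
      = q k j * g j - (if k = j then degA q hg k * g j else 0) := by
    intro j
    simp only [matA, Matrix.of_apply, sub_mul, ite_mul, zero_mul]
  simp only [this]
  rw [Finset.sum_sub_distrib, Finset.sum_ite_eq, if_pos (Finset.mem_univ k)]

/-- For a function supported on `S` and a point of `S`, the truncated Laplacian is given
by the matrix `matA`. -/
lemma lapS_restrict (hg : IsGraph q) (S : Finset V) (g : V → ℝ) (hgS : ∀ x ∉ S, g x = 0)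
    {x : V} (hx : x ∈ S) :
    lapS q S g x = (matA q hg S).mulVec (fun j => g j) ⟨x, hx⟩ := by
  rw [lapS, if_pos hx, lap_eq_finsum' q hg, matA_mulVec q hg]
  congr 1
  have h1 : (∑ j : {v // v ∈ S}, q x j * g j) = ∑ y ∈ S, q x y * g y :=
    Finset.sum_coe_sort S (fun y => q x y * g y)
  rw [h1]
  have h2 : ∑ y ∈ S, q x y * g y = ∑ y ∈ S ∩ (hg.2 x).toFinset, q x y * g y := by
    refine (Finset.sum_subset Finset.inter_subset_left fun y hyS hyn => ?_).symm
    have : y ∉ (hg.2 x).toFinset := fun hc => hyn (Finset.mem_inter.mpr ⟨hyS, hc⟩)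
    rw [q_eq_zero_of_not_mem q hg this, zero_mul]
  have h3 : ∑ y ∈ (hg.2 x).toFinset, q x y * g y
      = ∑ y ∈ S ∩ (hg.2 x).toFinset, q x y * g y := by
    refine (Finset.sum_subset Finset.inter_subset_right fun y hyn hyi => ?_).symm
    have : y ∉ S := fun hc => hyi (Finset.mem_inter.mpr ⟨hc, hyn⟩)
    rw [hgS y this, mul_zero]
  rw [h2, h3]

lemma lapS_iterate (hg : IsGraph q) (S : Finset V) (f : V → ℝ) :
    ∀ k : ℕ,
      (∀ x ∉ S, ((lapS q S)^[k] (fun v => if v ∈ S then f v else 0)) x = 0)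
      ∧ ∀ (x : V) (hx : x ∈ S), ((lapS q S)^[k] (fun v => if v ∈ S then f v else 0)) x
          = ((matA q hg S) ^ k).mulVec (fun j => f j) ⟨x, hx⟩ := by
  intro k
  induction k with
  | zero =>
    constructor
    · intro x hx; simp [if_neg hx]
    · intro x hx
      simp [if_pos hx, pow_zero, Matrix.one_mulVec]
  | succ k ih =>
    constructor
    · intro x hx
      rw [Function.iterate_succ_apply', lapS, if_neg hx]
    · intro x hx
      rw [Function.iterate_succ_apply']
      rw [lapS_restrict q hg S _ ih.1 hx]
      have : (fun j : {v // v ∈ S} =>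
          ((lapS q S)^[k] (fun v => if v ∈ S then f v else 0)) j)
          = ((matA q hg S) ^ k).mulVec (fun j => f j) := by
        funext j
        rw [ih.2 j j.2]
      rw [this, Matrix.mulVec_mulVec, ← pow_succ']

lemma heatS_eq_exp (hg : IsGraph q) (S : Finset V) (f : V → ℝ) (t : ℝ) {x : V} (hx : x ∈ S) :
    heatS q S t f x = (exp (t • matA q hg S)).mulVec (fun j => f j) ⟨x, hx⟩ := by
  rw [exp_smul_mulVec_eq_tsum, heatS]
  congr 1
  funext k
  rw [(lapS_iterate q hg S f k).2 x hx]

lemma heatS_eq_zero_of_not_mem (hg : IsGraph q) (S : Finset V) (f : V → ℝ) (t : ℝ)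
    {x : V} (hx : x ∉ S) : heatS q S t f x = 0 := by
  rw [heatS]
  have h : ∀ k : ℕ, ((lapS q S)^[k] (fun v => if v ∈ S then f v else 0)) x = 0 :=
    fun k => (lapS_iterate q hg S f k).1 x hx
  simp only [h, mul_zero]
  exact tsum_zero

lemma heatS_zero_fun (S : Finset V) (t : ℝ) (x : V) :
    heatS q S t (fun _ => (0 : ℝ)) x = 0 := by
  rw [heatS]
  have h0 : (fun v => if v ∈ S then (0 : ℝ) else 0) = fun _ => (0 : ℝ) := by
    funext v; simp
  have hfix : lapS q S (fun _ => (0 : ℝ)) = fun _ => (0 : ℝ) := by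
    funext y
    rw [lapS, lap]
    simp
  rw [h0]
  simp only [Function.iterate_fixed hfix, mul_zero]
  exact tsum_zero

end GraphAux
section KeyLemma

open NormedSpace

attribute [local instance 2000] Matrix.linftyOpNormedRing Matrix.linftyOpNormedAlgebra

variable {V : Type*}

lemma heatS_le_of_supersolution (q : V → V → ℝ) (hg : IsGraph q)
    (u u' : ℝ → V → ℝ)
    (hnonneg : ∀ t : ℝ, 0 ≤ t → ∀ x, 0 ≤ u t x)
    (hderiv : ∀ x, ∀ t : ℝ, 0 ≤ t →
      HasDerivWithinAt (fun s => u s x) (u' t x) (Set.Ici (0 : ℝ)) t)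
    (hineq : ∀ x, ∀ t : ℝ, 0 ≤ t → lap q (u t) x ≤ u' t x)
    (S : Finset V) (t : ℝ) (ht : 0 ≤ t) {x : V} (hx : x ∈ S) :
    heatS q S t (u 0) x ≤ u t x := by
  set A := matA q hg S with hA
  have hAoff := matA_offdiag_nonneg q hg S
  -- pointwise inequality `A u_s ≤ u'_s` on `S`
  have hkey : ∀ s : ℝ, 0 ≤ s → ∀ k : {v // v ∈ S},
      A.mulVec (fun j => u s j) k ≤ u' s k := by
    intro s hs k
    refine le_trans ?_ (hineq k s hs)
    rw [hA, matA_mulVec q hg S, lap_eq_finsum' q hg]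
    have h1 : (∑ j : {v // v ∈ S}, q k j * u s j) = ∑ y ∈ S, q k y * u s y :=
      Finset.sum_coe_sort S (fun y => q k y * u s y)
    have h2 : ∑ y ∈ S, q (k : V) y * u s y
        ≤ ∑ y ∈ (hg.2 (k : V)).toFinset, q k y * u s y := by
      have hS : ∑ y ∈ S, q (k : V) y * u s y
          = ∑ y ∈ S ∩ (hg.2 (k : V)).toFinset, q k y * u s y := by
        refine (Finset.sum_subset Finset.inter_subset_left fun y hyS hyn => ?_).symm
        have : y ∉ (hg.2 (k : V)).toFinset := fun hc => hyn (Finset.mem_inter.mpr ⟨hyS, hc⟩)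
        rw [q_eq_zero_of_not_mem q hg this, zero_mul]
      rw [hS]
      refine Finset.sum_le_sum_of_subset_of_nonneg Finset.inter_subset_right fun y _ _ =>
        mul_nonneg (hg.1 _ y) (hnonneg s hs y)
    rw [h1]
    exact sub_le_sub_right h2 _
  -- the auxiliary function `F i s = (exp ((t-s)A) u_s)(i)`
  set F : {v // v ∈ S} → ℝ → ℝ :=
    fun i s => ∑ j : {v // v ∈ S}, (exp ((t - s) • A)) i j * u s j with hF
  have hE : ∀ (i j : {v // v ∈ S}) (s : ℝ),
      HasDerivAt (fun r => (exp ((t - r) • A)) i j)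
        (-((exp ((t - s) • A) * A) i j)) s := by
    intro i j s
    have h1 : HasDerivAt (fun r : ℝ => exp (r • A)) (exp ((t - s) • A) * A) (t - s) :=
      hasDerivAt_exp_smul_const A (t - s)
    have h2 : HasDerivAt (fun r : ℝ => t - r) (-1 : ℝ) s := (hasDerivAt_id s).const_sub t
    have h3 := HasDerivAt.scomp s h1 h2
    have h4 := (entryCLM i j).hasFDerivAt.comp_hasDerivAt s h3
    have h5 : HasDerivAt (fun r => (exp ((t - r) • A)) i j)
        (entryCLM i j ((-1 : ℝ) • (exp ((t - s) • A) * A))) s := h4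
    simpa [Function.comp_def, neg_one_smul, entryCLM_apply] using h5
  have hderF : ∀ (i : {v // v ∈ S}) (s : ℝ), s ∈ Set.Ioo 0 t →
      HasDerivAt (F i)
        (∑ j : {v // v ∈ S}, (-((exp ((t - s) • A) * A) i j) * u s j
            + (exp ((t - s) • A)) i j * u' s (j : V))) s := by
    intro i s hs
    refine HasDerivAt.fun_sum fun j _ => ?_
    have hu : HasDerivAt (fun r => u r (j : V)) (u' s j) s :=
      (hderiv j s hs.1.le).hasDerivAt (Ici_mem_nhds hs.1)
    exact (hE i j s).mul hu
  have hDnn : ∀ (i : {v // v ∈ S}) (s : ℝ), s ∈ Set.Ioo 0 t →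
      0 ≤ ∑ j : {v // v ∈ S}, (-((exp ((t - s) • A) * A) i j) * u s j
          + (exp ((t - s) • A)) i j * u' s (j : V)) := by
    intro i s hs
    have hEnn : ∀ j, 0 ≤ (exp ((t - s) • A)) i j := fun j =>
      exp_smul_entry_nonneg hAoff (sub_nonneg.mpr hs.2.le) i j
    have hmul : ∑ j : {v // v ∈ S}, ((exp ((t - s) • A) * A) i j) * u s j
        = ∑ kk : {v // v ∈ S}, (exp ((t - s) • A)) i kk
            * A.mulVec (fun j => u s j) kk := by
      simp only [Matrix.mul_apply, Matrix.mulVec, dotProduct, Finset.sum_mul,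
        Finset.mul_sum]
      rw [Finset.sum_comm]
      exact Finset.sum_congr rfl fun kk _ => Finset.sum_congr rfl fun j _ => by ring
    have hsum_eq : ∑ j : {v // v ∈ S}, (-((exp ((t - s) • A) * A) i j) * u s j
          + (exp ((t - s) • A)) i j * u' s (j : V))
        = ∑ kk : {v // v ∈ S}, (exp ((t - s) • A)) i kk
            * (u' s (kk : V) - A.mulVec (fun j => u s j) kk) := by
      rw [Finset.sum_add_distrib]
      simp only [mul_sub, neg_mul]
      rw [Finset.sum_sub_distrib, Finset.sum_neg_distrib, ← hmul]
      ring
    rw [hsum_eq]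
    exact Finset.sum_nonneg fun kk _ =>
      mul_nonneg (hEnn kk) (sub_nonneg.mpr (hkey s hs.1.le kk))
  have hmono : MonotoneOn (F ⟨x, hx⟩) (Set.Icc 0 t) := by
    refine monotoneOn_of_deriv_nonneg (convex_Icc 0 t) ?_ ?_ ?_
    · refine continuousOn_finset_sum _ fun j _ => ContinuousOn.mul ?_ ?_
      · refine Continuous.continuousOn ?_
        rw [continuous_iff_continuousAt]
        exact fun s => (hE _ j s).continuousAt
      · intro s hs
        exact ((hderiv j s hs.1).continuousWithinAt).mono Set.Icc_subset_Ici_self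
    · rw [interior_Icc]
      intro s hs
      exact (hderF _ s hs).differentiableAt.differentiableWithinAt
    · rw [interior_Icc]
      intro s hs
      rw [(hderF _ s hs).deriv]
      exact hDnn _ s hs
  have h01 := hmono (Set.left_mem_Icc.mpr ht) (Set.right_mem_Icc.mpr ht) ht
  have hFt : F ⟨x, hx⟩ t = u t x := by
    simp only [hF, sub_self, zero_smul, NormedSpace.exp_zero, Matrix.one_apply, ite_mul,
      one_mul, zero_mul]
    rw [Finset.sum_ite_eq, if_pos (Finset.mem_univ _)]
  have hF0 : F ⟨x, hx⟩ 0 = heatS q S t (u 0) x := by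
    rw [heatS_eq_exp q hg S (u 0) t hx, Matrix.mulVec, dotProduct]
    simp only [hF, sub_zero, hA]
  rw [← hF0, ← hFt]
  exact h01

end KeyLemma
theorem heat_semigroup_minimal_solution
    {V : Type*} [Countable V] (q : V → V → ℝ) (hg : IsGraph q)
    (u u' : ℝ → V → ℝ)
    (hbdd : ∀ t : ℝ, 0 ≤ t → IsBoundedFun (u t))
    (hnonneg : ∀ t : ℝ, 0 ≤ t → ∀ x, 0 ≤ u t x)
    (hderiv : ∀ x, ∀ t : ℝ, 0 ≤ t →
      HasDerivWithinAt (fun s => u s x) (u' t x) (Set.Ici (0 : ℝ)) t)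
    (hineq : ∀ x, ∀ t : ℝ, 0 ≤ t → lap q (u t) x ≤ u' t x) :
    ∀ t : ℝ, 0 ≤ t → ∀ x, heat q t (u 0) x ≤ u t x := by
  intro t ht x
  haveI : Nonempty (Finset V) := ⟨∅⟩
  have hpos : (fun v => max (u 0 v) 0) = u 0 :=
    funext fun v => max_eq_left (hnonneg 0 le_rfl v)
  have hneg : (fun v => max (-(u 0 v)) 0) = fun _ => (0 : ℝ) :=
    funext fun v => max_eq_right (neg_nonpos.mpr (hnonneg 0 le_rfl v))
  unfold heat
  rw [hpos, hneg]
  have hzero : heatPos q t (fun _ => (0 : ℝ)) x = 0 := by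
    unfold heatPos
    have h : (fun S : Finset V => heatS q S t (fun _ => (0 : ℝ)) x) = fun _ => (0 : ℝ) :=
      funext fun S => heatS_zero_fun q S t x
    rw [h]
    exact ciSup_const
  rw [hzero, sub_zero]
  unfold heatPos
  refine ciSup_le fun S => ?_
  by_cases hx : x ∈ S
  · exact heatS_le_of_supersolution q hg u u' hnonneg hderiv hineq S t ht hx
  · rw [heatS_eq_zero_of_not_mem q hg S _ t hx]
    exact hnonneg t ht x

end OllivierGraph
end

section
/- Let c>0 and let φ_t(n) := P_t^{ℕ0} 1_{ℕ+}(n) be the heat semigroup of the birth-death chain on ℕ0 with rates 2c and absorbing state 0 applied to the indicator of the positive integers. Then for every integer r ≥ 1 and every t > 0: φ_t(r) ≤ r/(2√(t·c)). -/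
open scoped BigOperators Classical

namespace OllivierGraph

variable {V : Type*}

-- ### Auxiliary development


/-- Binomial coefficient with integer lower index, zero for negatives. -/
noncomputable def Cz (k : ℕ) (m : ℤ) : ℝ := if 0 ≤ m then (Nat.choose k m.toNat : ℝ) else 0

/-- Left endpoint of the reflection window. -/
def lw (k x : ℕ) : ℤ := ((k : ℤ) - x + 2) / 2

/-- Sum of `x` consecutive binomial coefficients, centered via reflection. -/
noncomputable def psiS (k x : ℕ) : ℝ := ∑ i ∈ Finset.range x, Cz k (lw k x + i)

lemma Cz_nonneg (k : ℕ) (m : ℤ) : 0 ≤ Cz k m := by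
  unfold Cz; split <;> positivity

lemma Cz_pascal (k : ℕ) (m : ℤ) : Cz (k+1) m = Cz k m + Cz k (m-1) := by
  unfold Cz
  rcases lt_trichotomy m 0 with h | h | h
  · rw [if_neg (by omega), if_neg (by omega), if_neg (by omega)]; ring
  · subst h; norm_num
  · rw [if_pos (by omega), if_pos (by omega), if_pos (by omega)]
    obtain ⟨j, hj⟩ : ∃ j : ℕ, m = (j : ℤ) + 1 := ⟨(m - 1).toNat, by omega⟩
    subst hj
    have h1 : ((j : ℤ) + 1).toNat = j + 1 := by omega
    have h2 : ((j : ℤ) + 1 - 1).toNat = j := by omega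
    rw [h1, h2, Nat.choose_succ_succ]
    push_cast; ring

lemma psiS_nonneg (k x : ℕ) : 0 ≤ psiS k x :=
  Finset.sum_nonneg fun _ _ => Cz_nonneg _ _

lemma psiS_zero (k : ℕ) : psiS k 0 = 0 := by simp [psiS]

lemma psiS_base (x : ℕ) (hx : 1 ≤ x) : psiS 0 x = 1 := by
  unfold psiS
  have hlw1 : lw 0 x ≤ 0 := by unfold lw; omega
  have hlw2 : 0 ≤ lw 0 x + (x - 1 : ℕ) := by unfold lw; omega
  have hCz : ∀ m : ℤ, Cz 0 m = if m = 0 then 1 else 0 := by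
    intro m; unfold Cz
    rcases lt_trichotomy m 0 with h | h | h
    · rw [if_neg (by omega), if_neg (by omega)]
    · subst h; norm_num
    · rw [if_pos (by omega), if_neg (by omega), Nat.choose_eq_zero_of_lt (by omega)]
      norm_num
  simp_rw [hCz]
  have : ∀ i ∈ Finset.range x, (if lw 0 x + (i:ℤ) = 0 then (1:ℝ) else 0)
      = if i = (-(lw 0 x)).toNat then 1 else 0 := by
    intro i _; congr 1
    simp only [eq_iff_iff]; omega
  rw [Finset.sum_congr rfl this, Finset.sum_ite_eq' (Finset.range x)]
  rw [if_pos]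
  rw [Finset.mem_range]
  omega

lemma psiS_rec (k y : ℕ) : psiS (k+1) (y+1) = psiS k y + psiS k (y+2) := by
  have hL1 : lw (k+1) (y+1) = lw k (y+2) + 1 := by unfold lw; push_cast; omega
  have hL2 : lw k y = lw k (y+2) + 1 := by unfold lw; push_cast; omega
  set L := lw k (y+2) with hLdef
  have h1 : psiS (k+1) (y+1)
      = ∑ i ∈ Finset.range (y+1), (Cz k (L + 1 + i) + Cz k (L + i)) := by
    unfold psiS
    rw [hL1]
    refine Finset.sum_congr rfl fun i _ => ?_
    rw [Cz_pascal]
    have e : L + 1 + (i:ℤ) - 1 = L + i := by ring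
    rw [e]
  rw [h1, Finset.sum_add_distrib]
  have h2 : ∑ i ∈ Finset.range (y+1), Cz k (L + 1 + i) = psiS k y + Cz k (L + 1 + y) := by
    rw [Finset.sum_range_succ]
    congr 1
    unfold psiS
    rw [hL2]
  have h3 : ∑ i ∈ Finset.range (y+1), Cz k (L + i) = psiS k (y+2) - Cz k (L + 1 + y) := by
    have : psiS k (y+2) = ∑ i ∈ Finset.range (y+1), Cz k (L + i) + Cz k (L + (y+1)) := by
      unfold psiS
      rw [← hLdef, Finset.sum_range_succ]
      push_cast
      ring_nf
    rw [this]
    have e : L + ((y:ℤ)+1) = L + 1 + y := by ring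
    rw [e]; ring
  rw [h2, h3]; ring

lemma psiS_le (k x : ℕ) : psiS k x ≤ (x : ℝ) * (Nat.choose k (k/2)) := by
  unfold psiS
  calc ∑ i ∈ Finset.range x, Cz k (lw k x + i)
      ≤ ∑ _i ∈ Finset.range x, (Nat.choose k (k/2) : ℝ) := by
        refine Finset.sum_le_sum fun i _ => ?_
        unfold Cz
        split
        · exact_mod_cast Nat.choose_le_middle _ _
        · positivity
    _ = (x : ℝ) * (Nat.choose k (k/2)) := by
        rw [Finset.sum_const, Finset.card_range, nsmul_eq_mul]

lemma cb_sq (m : ℕ) : (Nat.centralBinom m)^2 * (2*m+1) ≤ 16^m := by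
  induction m with
  | zero => simp [Nat.centralBinom]
  | succ n ih =>
    have key := Nat.succ_mul_centralBinom_succ n
    have hsq : (n+1)^2 * ((Nat.centralBinom (n+1))^2 * (2*(n+1)+1))
        = 4 * (2*n+1) * (2*n+3) * ((Nat.centralBinom n)^2 * (2*n+1)) := by
      have : ((n+1) * Nat.centralBinom (n+1))^2 * (2*n+3)
          = (2 * (2*n+1) * Nat.centralBinom n)^2 * (2*n+3) := by rw [key]
      nlinarith [this]
    have hle : (n+1)^2 * ((Nat.centralBinom (n+1))^2 * (2*(n+1)+1))
        ≤ (n+1)^2 * 16^(n+1) := by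
      rw [hsq]
      calc 4 * (2*n+1) * (2*n+3) * ((Nat.centralBinom n)^2 * (2*n+1))
          ≤ 4 * (2*n+1) * (2*n+3) * 16^n := by
            exact Nat.mul_le_mul_left _ ih
        _ = (4 * (2*n+1) * (2*n+3)) * 16^n := by ring
        _ ≤ (16 * (n+1)^2) * 16^n := Nat.mul_le_mul_right _ (by nlinarith)
        _ = (n+1)^2 * 16^(n+1) := by ring
    exact Nat.le_of_mul_le_mul_left hle (by positivity)

lemma chooseHalf_sq (k : ℕ) : (Nat.choose k (k/2))^2 * (k+1) ≤ 4^k := by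
  rcases Nat.even_or_odd k with ⟨m, hm⟩ | ⟨m, hm⟩
  · subst hm
    have h1 : (m + m) / 2 = m := by omega
    have h2 : m + m = 2 * m := by ring
    rw [h1, h2]
    have h3 : Nat.choose (2*m) m = Nat.centralBinom m := rfl
    rw [h3]
    have h4 : (4:ℕ)^(2*m) = 16^m := by rw [pow_mul]; norm_num
    rw [h4]
    exact cb_sq m
  · subst hm
    have h1 : (2*m + 1) / 2 = m := by omega
    rw [h1]
    have hdb : 2 * Nat.choose (2*m+1) m = Nat.centralBinom (m+1) := by
      unfold Nat.centralBinom
      have h2 : 2*(m+1) = (2*m+1)+1 := by ring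
      rw [h2, Nat.choose_succ_succ]
      have h3 : Nat.choose (2*m+1) (m+1) = Nat.choose (2*m+1) m := by
        have := Nat.choose_symm (n := 2*m+1) (k := m) (by omega)
        have h4 : 2*m+1-m = m+1 := by omega
        rw [h4] at this
        omega
      simp only [Nat.succ_eq_add_one]
      omega
    have key : 4 * ((Nat.choose (2*m+1) m)^2 * (2*m+1+1)) ≤ 4 * 4^(2*m+1) := by
      have e1 : 4 * ((Nat.choose (2*m+1) m)^2 * (2*m+1+1))
          = (Nat.centralBinom (m+1))^2 * (2*m+2) := by rw [← hdb]; ring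
      have e2 : (4:ℕ) * 4^(2*m+1) = 16^(m+1) := by
        rw [← pow_succ']
        have : (4:ℕ)^(2*m+2) = 16^(m+1) := by
          have : 2*m+2 = 2*(m+1) := by ring
          rw [this, pow_mul]; norm_num
        exact this
      rw [e1, e2]
      calc (Nat.centralBinom (m+1))^2 * (2*m+2)
          ≤ (Nat.centralBinom (m+1))^2 * (2*(m+1)+1) := by
            exact Nat.mul_le_mul_left _ (by omega)
        _ ≤ 16^(m+1) := cb_sq (m+1)
    exact Nat.le_of_mul_le_mul_left key (by norm_num)

lemma chooseHalf_real (k : ℕ) :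
    (Nat.choose k (k/2) : ℝ) * Real.sqrt (k+1) ≤ 2^k := by
  have h : ((Nat.choose k (k/2) : ℝ))^2 * (k+1) ≤ (2^k)^2 := by
    have := chooseHalf_sq k
    have h2 : ((2:ℝ)^k)^2 = 4^k := by
      rw [← pow_mul, mul_comm, pow_mul]; norm_num
    rw [h2]
    exact_mod_cast this
  have h3 : (Nat.choose k (k/2) : ℝ) * Real.sqrt (k+1)
      = Real.sqrt (((Nat.choose k (k/2) : ℝ))^2 * (k+1)) := by
    rw [Real.sqrt_mul (by positivity), Real.sqrt_sq (by positivity)]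
  rw [h3]
  calc Real.sqrt (((Nat.choose k (k/2) : ℝ))^2 * (k+1))
      ≤ Real.sqrt ((2^k)^2) := Real.sqrt_le_sqrt h
    _ = 2^k := Real.sqrt_sq (by positivity)



lemma poisson_sum_le (μ : ℝ) (hμ : 0 < μ) :
    ∑' j : ℕ, μ^j / (Nat.factorial j * Real.sqrt (j+1)) ≤ Real.exp μ / Real.sqrt μ := by
  have hnn : ∀ j : ℕ, 0 ≤ μ^j / (Nat.factorial j * Real.sqrt (j+1)) := by
    intro j
    have : (0:ℝ) < Nat.factorial j := by exact_mod_cast Nat.factorial_pos j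
    positivity
  refine Real.tsum_le_of_sum_range_le hnn fun n => ?_
  set A := ∑ j ∈ Finset.range n, μ^j / (Nat.factorial j * Real.sqrt (j+1)) with hA
  have hAnn : 0 ≤ A := Finset.sum_nonneg fun j _ => hnn j
  have hfact : ∀ j : ℕ, (0:ℝ) < Nat.factorial j := by
    intro j; exact_mod_cast Nat.factorial_pos j
  have hCS : A^2 ≤ (∑ j ∈ Finset.range n, μ^j / Nat.factorial j)
      * (∑ j ∈ Finset.range n, μ^j / Nat.factorial (j+1)) := by
    have hcs := Finset.sum_mul_sq_le_sq_mul_sq (Finset.range n)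
      (fun j => Real.sqrt (μ^j / Nat.factorial j))
      (fun j => Real.sqrt (μ^j / Nat.factorial j) / Real.sqrt (j+1))
    have e1 : ∀ j ∈ Finset.range n,
        Real.sqrt (μ^j / Nat.factorial j) * (Real.sqrt (μ^j / Nat.factorial j) / Real.sqrt (j+1))
        = μ^j / (Nat.factorial j * Real.sqrt (j+1)) := by
      intro j _
      rw [← mul_div_assoc, Real.mul_self_sqrt (by have := hfact j; positivity), div_div]
    have e2 : ∀ j ∈ Finset.range n,
        (Real.sqrt (μ^j / Nat.factorial j))^2 = μ^j / Nat.factorial j := by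
      intro j _
      exact Real.sq_sqrt (by have := hfact j; positivity)
    have e3 : ∀ j ∈ Finset.range n,
        (Real.sqrt (μ^j / Nat.factorial j) / Real.sqrt (j+1))^2 = μ^j / Nat.factorial (j+1) := by
      intro j _
      rw [div_pow, Real.sq_sqrt (by have := hfact j; positivity),
        Real.sq_sqrt (by positivity), div_div]
      congr 1
      rw [Nat.factorial_succ]
      push_cast; ring
    rw [Finset.sum_congr rfl e1, Finset.sum_congr rfl e2, Finset.sum_congr rfl e3] at hcs
    exact hcs
  have h1 : ∑ j ∈ Finset.range n, μ^j / Nat.factorial j ≤ Real.exp μ :=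
    Real.sum_le_exp_of_nonneg hμ.le n
  have h2 : ∑ j ∈ Finset.range n, μ^j / Nat.factorial (j+1) ≤ Real.exp μ / μ := by
    rw [le_div_iff₀ hμ]
    have e : (∑ j ∈ Finset.range n, μ^j / Nat.factorial (j+1)) * μ
        = ∑ j ∈ Finset.range n, μ^(j+1) / Nat.factorial (j+1) := by
      rw [Finset.sum_mul]
      refine Finset.sum_congr rfl fun j _ => ?_
      rw [pow_succ]; ring
    rw [e]
    have e2 : ∑ j ∈ Finset.range n, μ^(j+1) / Nat.factorial (j+1)
        = ∑ i ∈ Finset.range (n+1), μ^i / Nat.factorial i - 1 := by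
      rw [Finset.sum_range_succ' (fun i => μ^i / (Nat.factorial i : ℝ)) n]
      norm_num
    rw [e2]
    linarith [Real.sum_le_exp_of_nonneg hμ.le (n+1)]
  have hS1nn : (0:ℝ) ≤ ∑ j ∈ Finset.range n, μ^j / Nat.factorial j :=
    Finset.sum_nonneg fun j _ => by have := hfact j; positivity
  have hS2nn : (0:ℝ) ≤ ∑ j ∈ Finset.range n, μ^j / Nat.factorial (j+1) :=
    Finset.sum_nonneg fun j _ => by have := hfact (j+1); positivity
  have hsq : (Real.exp μ / Real.sqrt μ)^2 = Real.exp μ * (Real.exp μ / μ) := by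
    rw [div_pow, Real.sq_sqrt hμ.le]; ring
  have hA2 : A^2 ≤ (Real.exp μ / Real.sqrt μ)^2 := by
    rw [hsq]
    calc A^2 ≤ _ := hCS
      _ ≤ Real.exp μ * (Real.exp μ / μ) :=
        mul_le_mul h1 h2 hS2nn (Real.exp_pos μ).le
  calc A = Real.sqrt (A^2) := (Real.sqrt_sq hAnn).symm
    _ ≤ Real.sqrt ((Real.exp μ / Real.sqrt μ)^2) := Real.sqrt_le_sqrt hA2
    _ = Real.exp μ / Real.sqrt μ := Real.sqrt_sq (by positivity)

-- ### Part C

lemma lap_qBD_zero (c : ℝ) (h : ℕ → ℝ) : lap (qBD c) h 0 = 0 := by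
  unfold lap qBD
  have : ∀ y : ℕ, (if 0 < 0 ∧ (0 = y + 1 ∨ y = 0 + 1) then 2*c else 0) * (h y - h 0) = 0 := by
    intro y
    rw [if_neg (by omega)]
    ring
  simp_rw [this, tsum_zero]

lemma lap_qBD_succ (c : ℝ) (h : ℕ → ℝ) (y : ℕ) :
    lap (qBD c) h (y+1) = 2*c*(h y - h (y+1)) + 2*c*(h (y+2) - h (y+1)) := by
  unfold lap
  have hne : y ≠ y + 2 := by omega
  rw [tsum_eq_sum (s := {y, y+2}) ?h0]
  · rw [Finset.sum_pair hne]
    unfold qBD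
    rw [if_pos (by omega), if_pos (by omega)]
  · intro b hb
    simp only [Finset.mem_insert, Finset.mem_singleton] at hb
    push_neg at hb
    unfold qBD
    rw [if_neg (by omega)]
    ring

/-- The positive part of the truncated generator. -/
noncomputable def Nop (c : ℝ) (S : Finset ℕ) (h : ℕ → ℝ) (x : ℕ) : ℝ :=
  if x ∈ S then (if x = 0 then 4*c*h 0 else 2*c*(h (x-1) + h (x+1))) else 0

lemma lapS_eq_Nop (c : ℝ) (S : Finset ℕ) (h : ℕ → ℝ) (hsupp : ∀ x ∉ S, h x = 0) (x : ℕ) :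
    lapS (qBD c) S h x = Nop c S h x - 4*c*h x := by
  unfold lapS Nop
  by_cases hx : x ∈ S
  · rw [if_pos hx, if_pos hx]
    rcases x with _ | y
    · rw [lap_qBD_zero, if_pos rfl]; ring
    · rw [lap_qBD_succ, if_neg (by omega)]
      have : y + 1 - 1 = y := by omega
      rw [this]; ring
  · rw [if_neg hx, if_neg hx, hsupp x hx]; ring

lemma Nop_supp (c : ℝ) (S : Finset ℕ) (h : ℕ → ℝ) (x : ℕ) (hx : x ∉ S) :
    Nop c S h x = 0 := by unfold Nop; rw [if_neg hx]

lemma lapS_supp (q : ℕ → ℕ → ℝ) (S : Finset ℕ) (h : ℕ → ℝ) (x : ℕ) (hx : x ∉ S) :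
    lapS q S h x = 0 := by unfold lapS; rw [if_neg hx]

section Main

variable (c t : ℝ) (S : Finset ℕ)

/-- The truncated indicator initial datum. -/
noncomputable def gBD (S : Finset ℕ) : ℕ → ℝ :=
  fun v => if v ∈ S then (if 0 < v then (1:ℝ) else 0) else 0

lemma gBD_supp : ∀ x ∉ S, gBD S x = 0 := by
  intro x hx; unfold gBD; rw [if_neg hx]

lemma gBD_zero : gBD S 0 = 0 := by unfold gBD; simp

/-- The iterates of `Nop`. -/
noncomputable def Wf (c : ℝ) (S : Finset ℕ) (k : ℕ) : ℕ → ℝ := (Nop c S)^[k] (gBD S)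

lemma Wf_succ (k : ℕ) (x : ℕ) : Wf c S (k+1) x = Nop c S (Wf c S k) x := by
  unfold Wf
  rw [Function.iterate_succ_apply']

lemma Wf_zero (k : ℕ) : Wf c S k 0 = 0 := by
  induction k with
  | zero => exact gBD_zero S
  | succ n ih =>
    rw [Wf_succ]
    unfold Nop
    split
    · rw [if_pos rfl, ih]; ring
    · rfl

lemma Wf_supp (k : ℕ) : ∀ x ∉ S, Wf c S k x = 0 := by
  induction k with
  | zero => exact gBD_supp S
  | succ n _ => intro x hx; rw [Wf_succ]; exact Nop_supp c S _ x hx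

lemma Wf_nonneg (hc : 0 < c) (k : ℕ) (x : ℕ) : 0 ≤ Wf c S k x := by
  induction k generalizing x with
  | zero =>
    unfold Wf gBD
    simp only [Function.iterate_zero, id_eq]
    split
    · split <;> norm_num
    · exact le_refl 0
  | succ n ih =>
    rw [Wf_succ]
    unfold Nop
    split
    · split
      · have := ih 0; positivity
      · have h1 := ih (x-1); have h2 := ih (x+1); positivity
    · exact le_refl 0

end Main


lemma Wf_bound (c : ℝ) (S : Finset ℕ) (hc : 0 < c) (k : ℕ) (x : ℕ) :
    Wf c S k x ≤ (2*c)^k * psiS k x := by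
  induction k generalizing x with
  | zero =>
    rw [pow_zero, one_mul]
    show gBD S x ≤ psiS 0 x
    rcases x with _ | y
    · rw [gBD_zero, psiS_zero]
    · rw [psiS_base (y+1) (by omega)]
      unfold gBD
      split
      · split <;> norm_num
      · norm_num
  | succ n ih =>
    rw [Wf_succ]
    unfold Nop
    by_cases hxS : x ∈ S
    · rw [if_pos hxS]
      rcases x with _ | y
      · rw [if_pos rfl, Wf_zero]
        have h1 := psiS_nonneg (n+1) 0
        have h2 : (0:ℝ) ≤ (2*c)^(n+1) := by positivity
        nlinarith
      · rw [if_neg (by omega)]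
        have hy : y + 1 - 1 = y := by omega
        rw [hy]
        have h2c : (0:ℝ) ≤ 2*c := by linarith
        calc 2*c*(Wf c S n y + Wf c S n (y+1+1))
            ≤ 2*c*((2*c)^n * psiS n y + (2*c)^n * psiS n (y+2)) := by
              refine mul_le_mul_of_nonneg_left ?_ h2c
              exact add_le_add (ih y) (ih (y+2))
          _ = (2*c)^(n+1) * psiS (n+1) (y+1) := by rw [psiS_rec]; ring
    · rw [if_neg hxS]
      exact mul_nonneg (by positivity) (psiS_nonneg _ _)

lemma iter_supp (c : ℝ) (S : Finset ℕ) (n : ℕ) :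
    ∀ z ∉ S, (lapS (qBD c) S)^[n] (gBD S) z = 0 := by
  intro z hz
  cases n with
  | zero => exact gBD_supp S z hz
  | succ m => rw [Function.iterate_succ_apply']; exact lapS_supp _ _ _ _ hz

lemma iter_eq (c : ℝ) (S : Finset ℕ) (k : ℕ) (x : ℕ) :
    (lapS (qBD c) S)^[k] (gBD S) x
    = ∑ j ∈ Finset.range (k+1), (Nat.choose k j : ℝ) * (-(4*c))^(k-j) * Wf c S j x := by
  induction k generalizing x with
  | zero => simp [Wf]
  | succ n ih =>
    rw [Function.iterate_succ_apply']
    rw [lapS_eq_Nop c S _ (iter_supp c S n) x]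
    have hfun : (lapS (qBD c) S)^[n] (gBD S)
        = fun z => ∑ j ∈ Finset.range (n+1), (Nat.choose n j : ℝ) * (-(4*c))^(n-j) * Wf c S j z :=
      funext ih
    rw [hfun]
    simp only []
    have hNop : Nop c S
        (fun z => ∑ j ∈ Finset.range (n+1), (Nat.choose n j : ℝ) * (-(4*c))^(n-j) * Wf c S j z) x
        = ∑ j ∈ Finset.range (n+1), (Nat.choose n j : ℝ) * (-(4*c))^(n-j) * Wf c S (j+1) x := by
      unfold Nop
      by_cases hxS : x ∈ S
      · rw [if_pos hxS]
        rcases x with _ | y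
        · rw [if_pos rfl, Finset.mul_sum]
          refine Finset.sum_congr rfl fun j _ => ?_
          rw [Wf_succ]
          unfold Nop
          rw [if_pos hxS, if_pos rfl]
          ring
        · rw [if_neg (by omega)]
          have hy : y + 1 - 1 = y := by omega
          rw [hy, ← Finset.sum_add_distrib, Finset.mul_sum]
          refine Finset.sum_congr rfl fun j _ => ?_
          rw [Wf_succ]
          unfold Nop
          rw [if_pos hxS, if_neg (by omega), hy]
          ring
      · rw [if_neg hxS]
        symm
        refine Finset.sum_eq_zero fun j _ => ?_
        rw [Wf_succ, Nop_supp c S _ _ hxS]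
        ring
    rw [hNop]
    have hR : ∑ j ∈ Finset.range (n+2), (Nat.choose (n+1) j : ℝ) * (-(4*c))^(n+1-j) * Wf c S j x
        = (∑ j ∈ Finset.range (n+1),
            (Nat.choose (n+1) (j+1) : ℝ) * (-(4*c))^(n-j) * Wf c S (j+1) x)
          + (-(4*c))^(n+1) * Wf c S 0 x := by
      rw [Finset.sum_range_succ'
        (fun j => (Nat.choose (n+1) j : ℝ) * (-(4*c))^(n+1-j) * Wf c S j x) (n+1)]
      congr 1
      · refine Finset.sum_congr rfl fun j hj => ?_
        have : n + 1 - (j+1) = n - j := by omega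
        rw [this]
      · norm_num
    have hsplit : ∑ j ∈ Finset.range (n+1),
          (Nat.choose (n+1) (j+1) : ℝ) * (-(4*c))^(n-j) * Wf c S (j+1) x
        = (∑ j ∈ Finset.range (n+1), (Nat.choose n j : ℝ) * (-(4*c))^(n-j) * Wf c S (j+1) x)
          + ∑ j ∈ Finset.range (n+1), (Nat.choose n (j+1) : ℝ) * (-(4*c))^(n-j) * Wf c S (j+1) x := by
      rw [← Finset.sum_add_distrib]
      refine Finset.sum_congr rfl fun j _ => ?_
      rw [Nat.choose_succ_succ]
      push_cast
      ring
    have key : (∑ j ∈ Finset.range (n+1),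
          (Nat.choose n (j+1) : ℝ) * (-(4*c))^(n-j) * Wf c S (j+1) x)
          + (-(4*c))^(n+1) * Wf c S 0 x
        = (-(4*c)) * ∑ j ∈ Finset.range (n+1), (Nat.choose n j : ℝ) * (-(4*c))^(n-j) * Wf c S j x := by
      rw [Finset.sum_range_succ
        (fun j => (Nat.choose n (j+1) : ℝ) * (-(4*c))^(n-j) * Wf c S (j+1) x) n]
      rw [Finset.sum_range_succ'
        (fun j => (Nat.choose n j : ℝ) * (-(4*c))^(n-j) * Wf c S j x) n]
      rw [Nat.choose_succ_self]
      have hterm : ∀ j ∈ Finset.range n,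
          (Nat.choose n (j+1) : ℝ) * (-(4*c))^(n-j) * Wf c S (j+1) x
          = (-(4*c)) * ((Nat.choose n (j+1) : ℝ) * (-(4*c))^(n-(j+1)) * Wf c S (j+1) x) := by
        intro j hj
        rw [Finset.mem_range] at hj
        have he : n - j = (n - (j+1)) + 1 := by omega
        rw [he, pow_succ]
        ring
      rw [Finset.sum_congr rfl hterm, mul_add, Finset.mul_sum]
      simp only [Nat.cast_zero, Nat.choose_zero_right, Nat.cast_one, Nat.sub_self, pow_zero,
        zero_mul, add_zero, one_mul, Nat.sub_zero]
      rw [pow_succ]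
      ring
    linear_combination -hR - hsplit - key

lemma heatS_le (c t : ℝ) (S : Finset ℕ) (hc : 0 < c) (ht : 0 < t) (r : ℕ) (hr : 1 ≤ r) :
    heatS (qBD c) S t (fun k => if 0 < k then (1:ℝ) else 0) r
      ≤ (r : ℝ) / (2 * Real.sqrt (t*c)) := by
  have hfact : ∀ j : ℕ, (0:ℝ) < (Nat.factorial j : ℝ) := fun j => by
    exact_mod_cast Nat.factorial_pos j
  set μ : ℝ := 4*c*t with hμdef
  have hμ : 0 < μ := by rw [hμdef]; nlinarith
  set F : ℕ → ℝ := fun j => t^j * Wf c S j r / (Nat.factorial j : ℝ) with hF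
  set H : ℕ → ℝ := fun i => (-μ)^i / (Nat.factorial i : ℝ) with hH
  have hFnn : ∀ j, 0 ≤ F j := fun j =>
    div_nonneg (mul_nonneg (pow_nonneg ht.le j) (Wf_nonneg c S hc j r)) (hfact j).le
  have hdivle : ∀ j : ℕ, μ^j / (Nat.factorial j * Real.sqrt (j+1)) ≤ μ^j / Nat.factorial j := by
    intro j
    refine div_le_div_of_nonneg_left (by positivity) (hfact j) ?_
    refine le_mul_of_one_le_right (hfact j).le ?_
    rw [show (1:ℝ) = Real.sqrt 1 from (Real.sqrt_one).symm]
    exact Real.sqrt_le_sqrt (by norm_num)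
  have hFle : ∀ j, F j ≤ (r:ℝ) * (μ^j / (Nat.factorial j * Real.sqrt (j+1))) := by
    intro j
    have hsq : 0 < Real.sqrt ((j:ℝ)+1) := Real.sqrt_pos.2 (by positivity)
    have hC : (Nat.choose j (j/2) : ℝ) ≤ 2^j / Real.sqrt ((j:ℝ)+1) := by
      rw [le_div_iff₀ hsq]
      exact chooseHalf_real j
    have hnum : t^j * Wf c S j r ≤ (r:ℝ) * μ^j / Real.sqrt ((j:ℝ)+1) := by
      have h1 : t^j * Wf c S j r ≤ t^j * ((2*c)^j * psiS j r) :=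
        mul_le_mul_of_nonneg_left (Wf_bound c S hc j r) (pow_nonneg ht.le j)
      have h2 : psiS j r ≤ (r:ℝ) * (Nat.choose j (j/2) : ℝ) := psiS_le j r
      have h3 : (r:ℝ) * (Nat.choose j (j/2):ℝ) ≤ (r:ℝ) * (2^j / Real.sqrt ((j:ℝ)+1)) :=
        mul_le_mul_of_nonneg_left hC (by positivity)
      have h4 : t^j * ((2*c)^j * psiS j r)
          ≤ t^j * ((2*c)^j * ((r:ℝ) * (2^j / Real.sqrt ((j:ℝ)+1)))) := by
        refine mul_le_mul_of_nonneg_left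
          (mul_le_mul_of_nonneg_left (le_trans h2 h3) (by positivity)) (pow_nonneg ht.le j)
      calc t^j * Wf c S j r ≤ t^j * ((2*c)^j * ((r:ℝ) * (2^j / Real.sqrt ((j:ℝ)+1)))) :=
            le_trans h1 h4
        _ = (r:ℝ) * μ^j / Real.sqrt ((j:ℝ)+1) := by
            rw [hμdef, show (4*c*t) = t*(2*c)*2 from by ring, mul_pow, mul_pow]
            ring
    have hre : (r:ℝ) * (μ^j / (Nat.factorial j * Real.sqrt ((j:ℝ)+1)))
        = ((r:ℝ) * μ^j / Real.sqrt ((j:ℝ)+1)) / (Nat.factorial j) := by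
      rw [div_div, mul_div_assoc]
      congr 1
      rw [mul_comm (Nat.factorial j : ℝ) _]
    simp only [hF]
    rw [hre]
    exact (div_le_div_iff_of_pos_right (hfact j)).2 hnum
  have hFle2 : ∀ j, F j ≤ (r:ℝ) * (μ^j / Nat.factorial j) := fun j =>
    le_trans (hFle j) (mul_le_mul_of_nonneg_left (hdivle j) (by positivity))
  have hgsum : Summable (fun j : ℕ => (r:ℝ) * (μ^j / Nat.factorial j)) :=
    (Real.summable_pow_div_factorial μ).mul_left (r:ℝ)
  have hFsum : Summable F := Summable.of_nonneg_of_le hFnn hFle2 hgsum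
  have hbsum : Summable (fun j : ℕ => (r:ℝ) * (μ^j / (Nat.factorial j * Real.sqrt ((j:ℝ)+1)))) := by
    refine Summable.of_nonneg_of_le (fun j => ?_) (fun j => ?_) hgsum
    · have := hfact j; positivity
    · exact mul_le_mul_of_nonneg_left (hdivle j) (by positivity)
  have hFnorm : Summable (fun j => ‖F j‖) := by
    have he : (fun j => ‖F j‖) = F := funext fun j => by
      rw [Real.norm_eq_abs, abs_of_nonneg (hFnn j)]
    rw [he]
    exact hFsum
  have hHnorm : Summable (fun i => ‖H i‖) := by
    have he : (fun i => ‖H i‖) = fun i => μ^i / Nat.factorial i := by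
      funext i
      simp only [hH]
      rw [Real.norm_eq_abs, abs_div, abs_pow, abs_neg, abs_of_nonneg hμ.le, Nat.abs_cast]
    rw [he]
    exact Real.summable_pow_div_factorial μ
  have hterm : ∀ n : ℕ, t^n / (Nat.factorial n : ℝ) * ((lapS (qBD c) S)^[n] (gBD S) r)
      = ∑ j ∈ Finset.range (n+1), F j * H (n - j) := by
    intro n
    rw [iter_eq, Finset.mul_sum]
    refine Finset.sum_congr rfl fun j hj => ?_
    rw [Finset.mem_range] at hj
    have hjn : j ≤ n := by omega
    simp only [hF, hH]
    rw [Nat.cast_choose (K := ℝ) hjn]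
    have h1 : (-μ)^(n-j) = (-(4*c))^(n-j) * t^(n-j) := by
      rw [hμdef, show -(4*c*t) = (-(4*c))*t from by ring, mul_pow]
    rw [h1]
    have h2 : t^n = t^j * t^(n-j) := by rw [← pow_add]; congr 1; omega
    rw [h2]
    have hne1 : (Nat.factorial j : ℝ) ≠ 0 := (hfact j).ne'
    have hne2 : (Nat.factorial (n-j) : ℝ) ≠ 0 := (hfact (n-j)).ne'
    have hne3 : (Nat.factorial n : ℝ) ≠ 0 := (hfact n).ne'
    field_simp
  have hheat : heatS (qBD c) S t (fun k => if 0 < k then (1:ℝ) else 0) r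
      = (∑' j, F j) * (∑' i, H i) := by
    unfold heatS
    have hgB : (fun v => if v ∈ S then (fun k : ℕ => if 0 < k then (1:ℝ) else 0) v else 0)
        = gBD S := rfl
    simp only [hgB]
    rw [tsum_mul_tsum_eq_tsum_sum_range_of_summable_norm hFnorm hHnorm]
    exact tsum_congr hterm
  have hH_val : (∑' i, H i) = Real.exp (-μ) := by
    rw [Real.exp_eq_exp_ℝ, NormedSpace.exp_eq_tsum_div]
  have hFval : (∑' j, F j) ≤ (r:ℝ) * (Real.exp μ / Real.sqrt μ) := by
    calc (∑' j, F j)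
        ≤ ∑' j : ℕ, (r:ℝ) * (μ^j / (Nat.factorial j * Real.sqrt ((j:ℝ)+1))) :=
          Summable.tsum_le_tsum hFle hFsum hbsum
      _ = (r:ℝ) * ∑' j : ℕ, μ^j / (Nat.factorial j * Real.sqrt ((j:ℝ)+1)) := tsum_mul_left
      _ ≤ (r:ℝ) * (Real.exp μ / Real.sqrt μ) :=
          mul_le_mul_of_nonneg_left (poisson_sum_le μ hμ) (by positivity)
  rw [hheat, hH_val]
  have hfinal : (r:ℝ) * (Real.exp μ / Real.sqrt μ) * Real.exp (-μ)
      = (r:ℝ) / (2 * Real.sqrt (t*c)) := by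
    have hsqrtμ : Real.sqrt μ = 2 * Real.sqrt (t*c) := by
      rw [hμdef, show 4*c*t = 2^2*(t*c) from by ring,
        Real.sqrt_mul (by norm_num : (0:ℝ) ≤ 2^2), Real.sqrt_sq (by norm_num : (0:ℝ) ≤ 2)]
    have hexp : Real.exp μ ≠ 0 := (Real.exp_pos μ).ne'
    have hsq : Real.sqrt (t*c) ≠ 0 := by
      refine (Real.sqrt_pos.2 ?_).ne'
      nlinarith
    rw [Real.exp_neg, hsqrtμ]
    field_simp
  calc (∑' j, F j) * Real.exp (-μ)
      ≤ ((r:ℝ) * (Real.exp μ / Real.sqrt μ)) * Real.exp (-μ) :=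
        mul_le_mul_of_nonneg_right hFval (Real.exp_pos _).le
    _ = (r:ℝ) / (2 * Real.sqrt (t*c)) := hfinal

theorem phiBD_le
    (c : ℝ) (hc : 0 < c) (r : ℕ) (hr : 1 ≤ r) (t : ℝ) (ht : 0 < t) :
    phiBD c t r ≤ (r : ℝ) / (2 * Real.sqrt (t * c)) := by
  have hzero : heatPos (qBD c) t (fun _ => (0:ℝ)) r = 0 := by
    unfold heatPos
    have h0 : ∀ S : Finset ℕ, heatS (qBD c) S t (fun _ => (0:ℝ)) r = 0 := by
      intro S
      unfold heatS
      have hg : (fun v => if v ∈ S then (fun _ : ℕ => (0:ℝ)) v else 0) = fun _ : ℕ => (0:ℝ) := by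
        funext v; split <;> rfl
      simp only [hg]
      have hfix : lapS (qBD c) S (fun _ => (0:ℝ)) = fun _ => (0:ℝ) := by
        funext x
        unfold lapS lap
        split
        · simp
        · rfl
      have hiter : ∀ k : ℕ, (lapS (qBD c) S)^[k] (fun _ => (0:ℝ)) = fun _ => (0:ℝ) :=
        fun k => Function.iterate_fixed hfix k
      simp [hiter]
    simp_rw [h0]
    exact Real.iSup_const_zero
  have e1 : (fun v : ℕ => max (if 0 < v then (1:ℝ) else 0) 0)
      = fun v : ℕ => if 0 < v then (1:ℝ) else 0 := by
    funext v; split <;> norm_num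
  have e2 : (fun v : ℕ => max (-(if 0 < v then (1:ℝ) else 0)) 0) = fun _ : ℕ => (0:ℝ) := by
    funext v; split <;> norm_num
  unfold phiBD heat
  rw [e1, e2, hzero, sub_zero]
  unfold heatPos
  refine Real.iSup_le (fun S => heatS_le c t S hc ht r hr) ?_
  positivity

end OllivierGraph
end
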